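/- For chopped reals (x, Π) and (x', Π'): Match(x, Π) ⊆ Match(x', Π') if and only if (x, Π) engulfs (x', Π'). -/
import Mathlib


/-- `a : ℕ → ℕ` codes a partition of ℕ into consecutive finite intervals
`[a n, a (n+1))` with `a 0 = 0` and `a` strictly increasing. -/
def IntervalPartition (a : ℕ → ℕ) : Prop := a 0 = 0 ∧ StrictMono a

/-- `y` matches the chopped real `(x, a)`: `y` agrees with `x` on infinitely
many intervals of the partition. -/
def Matches (y : ℕ → Bool) (x : ℕ → Bool) (a : ℕ → ℕ) : Prop :=
  { n : ℕ | ∀ i ∈ Set.Ico (a n) (a (n + 1)), y i = x i }.Infinite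

/-- The set of reals matching the chopped real `(x, a)`. -/
def MatchSet (x : ℕ → Bool) (a : ℕ → ℕ) : Set (ℕ → Bool) := { y | Matches y x a }

/-- `(x, a)` engulfs `(x', a')`: all but finitely many intervals of `a` include
an interval of `a'` on which `x` and `x'` agree. -/
def Engulfs (x : ℕ → Bool) (a : ℕ → ℕ) (x' : ℕ → Bool) (a' : ℕ → ℕ) : Prop :=
  { n : ℕ | ¬ ∃ m : ℕ, Set.Ico (a' m) (a' (m + 1)) ⊆ Set.Ico (a n) (a (n + 1)) ∧
      ∀ i ∈ Set.Ico (a' m) (a' (m + 1)), x i = x' i }.Finite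

private lemma blockEx {a : ℕ → ℕ} (h0 : a 0 = 0) (hm : StrictMono a) (k : ℕ) :
    ∃ n, a n ≤ k ∧ k < a (n + 1) := by
  have hex : ∃ n, k < a (n + 1) :=
    ⟨k, lt_of_lt_of_le (Nat.lt_succ_self k) hm.le_apply⟩
  refine ⟨Nat.find hex, ?_, Nat.find_spec hex⟩
  rcases Nat.eq_zero_or_pos (Nat.find hex) with h | h
  · rw [h, h0]; exact Nat.zero_le k
  · have hmin := Nat.find_min hex (Nat.sub_lt h Nat.one_pos)
    push_neg at hmin
    have he : Nat.find hex - 1 + 1 = Nat.find hex := by omega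
    rwa [he] at hmin

private lemma blockUnique {a : ℕ → ℕ} (hm : StrictMono a) {p q k : ℕ}
    (hp1 : a p ≤ k) (hp2 : k < a (p + 1)) (hq1 : a q ≤ k) (hq2 : k < a (q + 1)) :
    p = q := by
  rcases Nat.lt_trichotomy p q with h | h | h
  · exact absurd (lt_of_lt_of_le hp2 (hm.monotone (Nat.succ_le_of_lt h))) (not_lt.2 hq1)
  · exact h
  · exact absurd (lt_of_lt_of_le hq2 (hm.monotone (Nat.succ_le_of_lt h))) (not_lt.2 hp1)

/-- `Match(x, a) ⊆ Match(x', a')` iff `(x, a)` engulfs `(x', a')`. -/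
theorem stmt6 (x x' : ℕ → Bool) (a a' : ℕ → ℕ)
    (ha : IntervalPartition a) (ha' : IntervalPartition a') :
    MatchSet x a ⊆ MatchSet x' a' ↔ Engulfs x a x' a' := by
  classical
  obtain ⟨ha0, haS⟩ := ha
  obtain ⟨ha0', haS'⟩ := ha'
  set B : Set ℕ := { n : ℕ | ¬ ∃ m : ℕ,
      Set.Ico (a' m) (a' (m + 1)) ⊆ Set.Ico (a n) (a (n + 1)) ∧
      ∀ i ∈ Set.Ico (a' m) (a' (m + 1)), x i = x' i } with hBdef
  constructor
  · -- subset → engulfs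
    intro hsub
    by_contra hB
    have hBinf : B.Infinite := hB
    -- build a strictly increasing sequence in B with gaps ≥ 2
    choose g hg1 hg2 using hBinf.exists_gt
    let f : ℕ → ℕ := fun k => Nat.rec (g 0) (fun _ prev => g (prev + 1)) k
    have hf0 : f 0 = g 0 := rfl
    have hfs : ∀ k, f (k + 1) = g (f k + 1) := fun k => rfl
    have hfB : ∀ k, f k ∈ B := by
      intro k
      cases k with
      | zero => exact hg1 0
      | succ k => rw [hfs]; exact hg1 _
    have hfgap : ∀ k, f k + 1 < f (k + 1) := by
      intro k; rw [hfs]; exact hg2 _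
    -- the candidate real y
    let P : ℕ → Prop := fun i => ∃ k, a (f k) ≤ i ∧ i < a (f k + 1)
    let y : ℕ → Bool := fun i => if P i then x i else !(x' i)
    have hyP : ∀ i, P i → y i = x i := by
      intro i hi; simp only [y, if_pos hi]
    have hynP : ∀ i, ¬ P i → y i = !(x' i) := by
      intro i hi; simp only [y, if_neg hi]
    -- y matches (x, a)
    have hy : y ∈ MatchSet x a := by
      have hss : Set.range f ⊆ { n : ℕ | ∀ i ∈ Set.Ico (a n) (a (n + 1)), y i = x i } := by
        rintro n ⟨k, rfl⟩ i hi
        exact hyP i ⟨k, hi.1, hi.2⟩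
      have hfinj : Function.Injective f := by
        have : StrictMono f := strictMono_nat_of_lt_succ fun k =>
          lt_trans (Nat.lt_succ_self _) (hfgap k)
        exact this.injective
      exact Set.Infinite.mono hss (Set.infinite_range_of_injective hfinj)
    -- hence y matches (x', a')
    have hy' : Matches y x' a' := hsub hy
    -- but no interval of a' is matched by y
    have hempty : ∀ m : ℕ, ∃ i, (a' m ≤ i ∧ i < a' (m + 1)) ∧ y i ≠ x' i := by
      intro m
      by_cases hall : ∀ i, a' m ≤ i → i < a' (m + 1) → P i
      · -- whole a'-interval inside chosen blocks: show it lies in one block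
        have hm0 : a' m < a' (m + 1) := haS' (Nat.lt_succ_self m)
        obtain ⟨k, hk1, hk2⟩ := hall (a' m) le_rfl hm0
        -- claim: a' (m+1) ≤ a (f k + 1)
        have hsub' : a' (m + 1) ≤ a (f k + 1) := by
          by_contra hgt
          push_neg at hgt
          set j := a (f k + 1) with hj
          have hj1 : a' m ≤ j := le_of_lt hk2
          obtain ⟨k', hk'1, hk'2⟩ := hall j hj1 hgt
          have hj3 : j < a (f k + 1 + 1) := haS (Nat.lt_succ_self _)
          have heq : f k' = f k + 1 := blockUnique haS hk'1 hk'2 le_rfl hj3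
          have hmono : StrictMono f := strictMono_nat_of_lt_succ fun k =>
            lt_trans (Nat.lt_succ_self _) (hfgap k)
          rcases Nat.lt_trichotomy k' k with h | h | h
          · exact (Nat.ne_of_lt (Nat.lt_succ_of_lt (hmono h))) heq
          · subst h
            exact (Nat.ne_of_lt (Nat.lt_succ_self (f k'))) heq
          · have hlt : f k + 1 < f k' :=
              lt_of_lt_of_le (hfgap k) (hmono.monotone (Nat.succ_le_of_lt h))
            exact (ne_of_gt hlt) heq
        -- so the a'-interval sits inside the bad block f k
        have hbad := hfB k
        rw [hBdef] at hbad
        simp only [Set.mem_setOf_eq] at hbad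
        push_neg at hbad
        have hcont : Set.Ico (a' m) (a' (m + 1)) ⊆ Set.Ico (a (f k)) (a (f k + 1)) := by
          intro i hi
          exact ⟨le_trans hk1 hi.1, lt_of_lt_of_le hi.2 hsub'⟩
        obtain ⟨i, hi, hne⟩ := hbad m hcont
        refine ⟨i, ⟨hi.1, hi.2⟩, ?_⟩
        rw [hyP i (hall i hi.1 hi.2)]
        exact hne
      · push_neg at hall
        obtain ⟨i, hi1, hi2, hnP⟩ := hall
        exact ⟨i, ⟨hi1, hi2⟩, by rw [hynP i hnP]; exact Bool.not_ne_self _⟩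
    -- contradiction: the matched set for (x', a') would be empty
    obtain ⟨m, hm⟩ := hy'.nonempty
    simp only [Set.mem_setOf_eq] at hm
    obtain ⟨i, ⟨hi1, hi2⟩, hne⟩ := hempty m
    exact hne (hm i ⟨hi1, hi2⟩)
  · -- engulfs → subset
    intro hE y hy
    have hGood : ({ n : ℕ | ∀ i ∈ Set.Ico (a n) (a (n + 1)), y i = x i } \ B).Infinite :=
      Set.Infinite.diff hy hE
    -- choose the inner interval for each good index
    let F : ℕ → ℕ := fun n =>
      if h : ∃ m : ℕ, Set.Ico (a' m) (a' (m + 1)) ⊆ Set.Ico (a n) (a (n + 1)) ∧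
          ∀ i ∈ Set.Ico (a' m) (a' (m + 1)), x i = x' i then h.choose else 0
    have hFspec : ∀ n ∉ B,
        Set.Ico (a' (F n)) (a' (F n + 1)) ⊆ Set.Ico (a n) (a (n + 1)) ∧
        ∀ i ∈ Set.Ico (a' (F n)) (a' (F n + 1)), x i = x' i := by
      intro n hn
      rw [hBdef] at hn
      simp only [Set.mem_setOf_eq, not_not] at hn
      simp only [F, dif_pos hn]
      exact hn.choose_spec
    have hinj : Set.InjOn F ({ n : ℕ | ∀ i ∈ Set.Ico (a n) (a (n + 1)), y i = x i } \ B) := by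
      intro n1 hn1 n2 hn2 heq
      have h1 := (hFspec n1 hn1.2).1
      have h2 := (hFspec n2 hn2.2).1
      have hne : a' (F n1) ∈ Set.Ico (a' (F n1)) (a' (F n1 + 1)) :=
        ⟨le_rfl, haS' (Nat.lt_succ_self _)⟩
      have hne2 : a' (F n2) ∈ Set.Ico (a' (F n2)) (a' (F n2 + 1)) :=
        ⟨le_rfl, haS' (Nat.lt_succ_self _)⟩
      have hin1 := h1 hne
      have hin2 := h2 hne2
      rw [heq] at hin1
      exact blockUnique haS hin1.1 hin1.2 hin2.1 hin2.2
    have himg : F '' ({ n : ℕ | ∀ i ∈ Set.Ico (a n) (a (n + 1)), y i = x i } \ B) ⊆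
        { m : ℕ | ∀ i ∈ Set.Ico (a' m) (a' (m + 1)), y i = x' i } := by
      rintro _ ⟨n, hn, rfl⟩ i hi
      have hspec := hFspec n hn.2
      have hix : y i = x i := hn.1 i (hspec.1 hi)
      rw [hix]
      exact hspec.2 i hi
    exact Set.Infinite.mono himg (Set.Infinite.image hinj hGood)
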